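/- Let $A$ be a unital complex Banach $\star$-algebra with unit $1$, $X$ a complex Banach space, $z \in A$ fixed, and $\phi : A \times A \to X$ a continuous bilinear map such that $\phi(a, b^\star) = \phi(z, 1)$ whenever $a b^\star = z$. Then $\phi(za, 1) = \phi(z, a)$ for all $a \in A$. -/

import Mathlib

theorem stmt_2 (A X : Type*) [NormedRing A] [NormedAlgebra ℂ A] [CompleteSpace A]
    [StarRing A] [StarModule ℂ A] [ContinuousStar A]
    [NormedAddCommGroup X] [NormedSpace ℂ X] [CompleteSpace X]
    (z : A) (φ : A →L[ℂ] A →L[ℂ] X)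
    (h : ∀ a b : A, a * star b = z → φ a (star b) = φ z 1) :
    ∀ a : A, φ (z * a) 1 = φ z a := by
  intro a
  set u : ℂ → A := fun t => 1 + t • a with hu_def
  have hu0 : u 0 = 1 := by simp [hu_def]
  have hu : HasDerivAt u a 0 := by
    simpa [hu_def] using (((hasDerivAt_id (0 : ℂ)).smul_const a).const_add 1)
  -- derivative of inverse
  have hinv : HasDerivAt (fun t => Ring.inverse (u t)) (-a) 0 := by
    have h1 : HasFDerivAt (Ring.inverse : A → A)
        (-((ContinuousLinearMap.mulLeftRight ℂ A) 1 1)) (u 0) := by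
      rw [hu0]
      simpa using hasFDerivAt_ringInverse (𝕜 := ℂ) (1 : Aˣ)
    have h2 := h1.comp_hasDerivAt 0 hu
    simpa [Function.comp_def] using h2
  -- derivative of z * u t
  have hzu : HasDerivAt (fun t => z * u t) (z * a) 0 := hu.const_mul z
  have hc : HasDerivAt (fun t => φ (z * u t)) (φ (z * a)) 0 :=
    φ.hasFDerivAt.comp_hasDerivAt 0 hzu
  have hg1 : HasDerivAt (fun t => φ (z * u t) (Ring.inverse (u t)))
      (φ (z * a) 1 + φ z (-a)) 0 := by
    have := hc.clm_apply hinv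
    simpa [hu0] using this
  -- eventually constant
  have hev : ∀ᶠ t in nhds (0 : ℂ), φ (z * u t) (Ring.inverse (u t)) = φ z 1 := by
    have hcont : Filter.Tendsto (fun t : ℂ => ‖t • a‖) (nhds 0) (nhds 0) := by
      have : Filter.Tendsto (fun t : ℂ => t • a) (nhds 0) (nhds ((0:ℂ) • a)) :=
        (continuous_id.smul continuous_const).tendsto 0
      simpa using this.norm
    have hsmall : ∀ᶠ t in nhds (0 : ℂ), ‖t • a‖ < 1 :=
      hcont.eventually_lt_const (by norm_num)
    filter_upwards [hsmall] with t ht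
    have hunit : IsUnit (u t) := by
      have := (Units.oneSub (-(t • a)) (by simpa using ht)).isUnit
      simpa [hu_def, sub_neg_eq_add] using this
    have key : (z * u t) * star (star (Ring.inverse (u t))) = z := by
      rw [star_star, mul_assoc, Ring.mul_inverse_cancel _ hunit, mul_one]
    have := h (z * u t) (star (Ring.inverse (u t))) key
    rwa [star_star] at this
  have hg0 : HasDerivAt (fun t => φ (z * u t) (Ring.inverse (u t))) 0 0 :=
    (hasDerivAt_const (0 : ℂ) (φ z 1)).congr_of_eventuallyEq hev
  have := hg1.unique hg0
  have h2 : φ (z * a) 1 - φ z a = 0 := by simpa [map_neg, sub_eq_add_neg] using this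
  rw [sub_eq_zero] at h2; exact h2
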